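/- Let $\Upsilon_\omega(a) = \inf_{u \in W^a_{\bar r}} J_\omega(u)$ for $a \in (0,\bar a)$ and $0 \le \omega < V_*$. Then for any $\theta > 1$ with $\theta a \in (0, \bar a)$, one has the strict-type subhomogeneity $\Upsilon_\omega(\theta a) \le \theta^2\, \Upsilon_\omega(a)$. -/

import Mathlib

open MeasureTheory Set

noncomputable section

/-- Points of `ℝ³`. -/
abbrev E3 := EuclideanSpace ℝ (Fin 3)

/-- The dipole kernel `K(x) = (1 - 3 cos²θ(x)) / |x|³`, where `θ(x)` is the angle between
`x` and the dipole axis `(0,0,1)`, so that `cos θ(x) = x₃ / |x|`. -/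
def K3 (x : E3) : ℝ := (1 - 3 * (x 2 / ‖x‖) ^ 2) / ‖x‖ ^ 3

/-- The nonlinear potential energy `N(u) = ∫ λ₁|u|⁴ + λ₂ (K ∗ |u|²)|u|² dx`. -/
def Nfun (l1 l2 : ℝ) (u : E3 → ℝ) : ℝ :=
  ∫ x : E3, (l1 * (u x) ^ 4 + l2 * (∫ y : E3, K3 (x - y) * (u y) ^ 2) * (u x) ^ 2)

/-- `‖u‖₂² = ∫ |u|²`. -/
def massSq (u : E3 → ℝ) : ℝ := ∫ x : E3, (u x) ^ 2

/-- `‖∇u‖₂² = ∫ |∇u|²`. -/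
def gradSq (u : E3 → ℝ) : ℝ := ∫ x : E3, ‖fderiv ℝ u x‖ ^ 2

/-- `‖u‖ₚᵖ = ∫ |u|ᵖ`. -/
def Pnorm (p : ℝ) (u : E3 → ℝ) : ℝ := ∫ x : E3, |u x| ^ p

/-- The energy functional
`J_ω(u) = (1/2)‖∇u‖₂² + ω‖u‖₂² + (1/2)N(u) + (2λ₃/p)‖u‖ₚᵖ`. -/
def Jfun (ω l1 l2 l3 p : ℝ) (u : E3 → ℝ) : ℝ :=
  1 / 2 * gradSq u + ω * massSq u + 1 / 2 * Nfun l1 l2 u + 2 * l3 / p * Pnorm p u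

/-- `W^a_{r̄} = {u ∈ S(a) : ‖∇u‖₂ < r̄}`. -/
def Wset (a rbar : ℝ) : Set (E3 → ℝ) :=
  {u | massSq u = a ^ 2 ∧ Real.sqrt (gradSq u) < rbar}

/-- `∂W^a_{r̄} = {u ∈ S(a) : ‖∇u‖₂ = r̄}`. -/
def bdryWset (a rbar : ℝ) : Set (E3 → ℝ) :=
  {u | massSq u = a ^ 2 ∧ Real.sqrt (gradSq u) = rbar}

/-- The unstable regime `𝓑 = {(λ₁,λ₂) : λ₁ < (4π/3)λ₂ ≤ 0 or λ₁ < -(8π/3)λ₂ ≤ 0}`. -/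
def Bset : Set (ℝ × ℝ) :=
  {q | (q.1 < 4 * Real.pi / 3 * q.2 ∧ 4 * Real.pi / 3 * q.2 ≤ 0) ∨
       (q.1 < -(8 * Real.pi / 3) * q.2 ∧ -(8 * Real.pi / 3) * q.2 ≤ 0)}

lemma log_eq_imp {A B : ℝ} (hA : 0 < A) (hB : 0 < B) (h : Real.log A = Real.log B) : A = B := by
  rw [← Real.exp_log hA, ← Real.exp_log hB, h]

lemma term1_eq {c1 c2 s : ℝ} (hc1 : 0 < c1) (hc2 : 0 < c2) (hs : 1 < s) :
    1 / 2 * (2 * c1) ^ ((s - 1) / s) * (2 * ((s - 1) * c2)) ^ (1 / s)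
      = c1 * ((s - 1) * c2 / c1) ^ (1 / s) := by
  have hm : (0:ℝ) < s - 1 := by linarith
  have hs0 : (0:ℝ) < s := by linarith
  apply log_eq_imp (by positivity) (by positivity)
  have hL : Real.log (1 / 2 * (2 * c1) ^ ((s - 1) / s) * (2 * ((s - 1) * c2)) ^ (1 / s))
      = -Real.log 2 + (s - 1) / s * (Real.log 2 + Real.log c1)
        + 1 / s * (Real.log 2 + Real.log (s - 1) + Real.log c2) := by
    rw [Real.log_mul (by positivity) (by positivity),
      Real.log_mul (by positivity) (by positivity),
      Real.log_rpow (by positivity), Real.log_rpow (by positivity),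
      Real.log_mul (by positivity) (by positivity),
      Real.log_mul (by positivity) (by positivity),
      Real.log_mul (by positivity) (by positivity), one_div, Real.log_inv]
    ring
  have hR : Real.log (c1 * ((s - 1) * c2 / c1) ^ (1 / s))
      = Real.log c1 + 1 / s * (Real.log (s - 1) + Real.log c2 - Real.log c1) := by
    rw [Real.log_mul (by positivity) (by positivity), Real.log_rpow (by positivity),
      Real.log_div (by positivity) (by positivity),
      Real.log_mul (by positivity) (by positivity)]
  rw [hL, hR]
  field_simp
  ring

lemma term2_eq {c1 c2 s : ℝ} (hc1 : 0 < c1) (hc2 : 0 < c2) (hs : 1 < s) :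
    2 * (c2 / 2) ^ (1 / s) * (2 * (s - 1) / c1) ^ (-((s - 1) / s))
      = c2 * (((s - 1) * c2 / c1) ^ (1 / s)) ^ (-(s - 1)) := by
  have hm : (0:ℝ) < s - 1 := by linarith
  have hs0 : (0:ℝ) < s := by linarith
  apply log_eq_imp (by positivity) (by positivity)
  have hL : Real.log (2 * (c2 / 2) ^ (1 / s) * (2 * (s - 1) / c1) ^ (-((s - 1) / s)))
      = Real.log 2 + 1 / s * (Real.log c2 - Real.log 2)
        + -((s - 1) / s) * (Real.log 2 + Real.log (s - 1) - Real.log c1) := by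
    rw [Real.log_mul (by positivity) (by positivity),
      Real.log_mul (by positivity) (by positivity),
      Real.log_rpow (by positivity), Real.log_rpow (by positivity),
      Real.log_div (by positivity) (by positivity),
      Real.log_div (by positivity) (by positivity),
      Real.log_mul (by positivity) (by positivity)]
  have hR : Real.log (c2 * (((s - 1) * c2 / c1) ^ (1 / s)) ^ (-(s - 1)))
      = Real.log c2 + -(s - 1) * (1 / s * (Real.log (s - 1) + Real.log c2 - Real.log c1)) := by
    rw [Real.log_mul (by positivity) (by positivity),
      Real.log_rpow (by positivity), Real.log_rpow (by positivity),
      Real.log_div (by positivity) (by positivity),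
      Real.log_mul (by positivity) (by positivity)]
  rw [hL, hR]
  field_simp
  ring

lemma int_scale (f : E3 → ℝ) {c : ℝ} (hc : 0 < c) :
    ∫ x : E3, f (c⁻¹ • x) = c ^ 3 * ∫ x : E3, f x := by
  rw [MeasureTheory.Measure.integral_comp_smul volume f c⁻¹, finrank_euclideanSpace_fin]
  rw [smul_eq_mul, inv_pow, inv_inv, abs_of_pos (by positivity)]

lemma K3_scale {c : ℝ} (hc : 0 < c) (x : E3) : K3 (c • x) = c⁻¹ ^ 3 * K3 x := by
  rcases eq_or_ne x 0 with rfl | hx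
  · simp [K3]
  · have hx' : (0:ℝ) < ‖x‖ := norm_pos_iff.2 hx
    have h2 : (c • x) 2 = c * x 2 := by simp [PiLp.smul_apply, smul_eq_mul]
    have hn : ‖c • x‖ = c * ‖x‖ := by rw [norm_smul, Real.norm_eq_abs, abs_of_pos hc]
    rw [K3, K3, h2, hn]
    have h4 : c * x 2 / (c * ‖x‖) = x 2 / ‖x‖ := by
      rw [mul_div_mul_left _ _ (ne_of_gt hc)]
    have h3 : (c * ‖x‖) ^ 3 = ‖x‖ ^ 3 * c ^ 3 := by ring
    rw [h4, h3, ← div_div, div_eq_mul_inv ((1 - 3 * (x 2 / ‖x‖) ^ 2) / ‖x‖ ^ 3), inv_pow,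
      mul_comm]

lemma fderiv_scale (u : E3 → ℝ) {w : ℝ} (hw : w ≠ 0) (x : E3) :
    fderiv ℝ (fun x => u (w • x)) x = w • fderiv ℝ u (w • x) := by
  let e : E3 ≃L[ℝ] E3 :=
    (LinearEquiv.smulOfNeZero ℝ E3 w hw).toContinuousLinearEquiv
  have he : ∀ y : E3, e y = w • y := fun y => rfl
  have hcomp : (fun x : E3 => u (w • x)) = u ∘ e := by
    funext y; simp [he]
  rw [hcomp, e.comp_right_fderiv]
  ext z
  simp [he, ContinuousLinearMap.smul_apply, _root_.map_smul]

lemma grad_scale (u : E3 → ℝ) {c : ℝ} (hc : 0 < c) :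
    gradSq (fun x => u (c⁻¹ • x)) = c * gradSq u := by
  have hw : (c⁻¹ : ℝ) ≠ 0 := by positivity
  have h1 : ∀ x : E3, ‖fderiv ℝ (fun x => u (c⁻¹ • x)) x‖ ^ 2
      = c⁻¹ ^ 2 * ‖fderiv ℝ u (c⁻¹ • x)‖ ^ 2 := by
    intro x
    rw [fderiv_scale u hw, norm_smul, Real.norm_eq_abs, abs_of_pos (by positivity), mul_pow]
  have h2 : gradSq (fun x => u (c⁻¹ • x))
      = ∫ x : E3, c⁻¹ ^ 2 * ‖fderiv ℝ u (c⁻¹ • x)‖ ^ 2 := by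
    rw [gradSq]; exact integral_congr_ae (Filter.Eventually.of_forall h1)
  rw [h2, integral_const_mul, int_scale (fun x => ‖fderiv ℝ u x‖ ^ 2) hc, gradSq]
  have h3 : c⁻¹ ^ 2 * (c ^3 * ∫ x : E3, ‖fderiv ℝ u x‖ ^ 2) = (c⁻¹^2*c^3) * ∫ x : E3, ‖fderiv ℝ u x‖ ^ 2 := by ring
  rw [h3]
  congr 1
  field_simp

lemma mass_scale (u : E3 → ℝ) {c : ℝ} (hc : 0 < c) :
    massSq (fun x => u (c⁻¹ • x)) = c ^ 3 * massSq u :=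
  int_scale (fun z => u z ^ 2) hc

lemma pnorm_scale (u : E3 → ℝ) (p : ℝ) {c : ℝ} (hc : 0 < c) :
    Pnorm p (fun x => u (c⁻¹ • x)) = c ^ 3 * Pnorm p u :=
  int_scale (fun z => |u z| ^ p) hc

lemma nfun_scale (u : E3 → ℝ) (l1 l2 : ℝ) {c : ℝ} (hc : 0 < c) :
    Nfun l1 l2 (fun x => u (c⁻¹ • x)) = c ^ 3 * Nfun l1 l2 u := by
  have hc' : c ≠ 0 := ne_of_gt hc
  have hinner : ∀ x : E3, (∫ y : E3, K3 (x - y) * (u (c⁻¹ • y)) ^ 2)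
      = ∫ y : E3, K3 (c⁻¹ • x - y) * (u y) ^ 2 := by
    intro x
    have h1 : (fun y : E3 => K3 (x - y) * (u (c⁻¹ • y)) ^ 2)
        = fun y : E3 => (fun z : E3 => K3 (x - c • z) * (u z) ^ 2) (c⁻¹ • y) := by
      funext y
      simp only [smul_inv_smul₀ hc']
    rw [h1, int_scale (fun z : E3 => K3 (x - c • z) * (u z) ^ 2) hc]
    have h2 : (fun z : E3 => K3 (x - c • z) * (u z) ^ 2)
        = fun z : E3 => c⁻¹ ^ 3 * (K3 (c⁻¹ • x - z) * (u z) ^ 2) := by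
      funext z
      have : x - c • z = c • (c⁻¹ • x - z) := by
        rw [smul_sub, smul_inv_smul₀ hc']
      rw [this, K3_scale hc]
      ring
    rw [h2, integral_const_mul]
    field_simp
  have hmain : (fun x : E3 => l1 * (u (c⁻¹ • x)) ^ 4
        + l2 * (∫ y : E3, K3 (x - y) * (u (c⁻¹ • y)) ^ 2) * (u (c⁻¹ • x)) ^ 2)
      = fun x : E3 => (fun z : E3 => l1 * (u z) ^ 4
        + l2 * (∫ y : E3, K3 (z - y) * (u y) ^ 2) * (u z) ^ 2) (c⁻¹ • x) := by
    funext x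
    rw [hinner x]
  rw [Nfun]
  rw [show (fun x : E3 => l1 * ((fun x => u (c⁻¹ • x)) x) ^ 4
      + l2 * (∫ y : E3, K3 (x - y) * ((fun x => u (c⁻¹ • x)) y) ^ 2)
        * ((fun x => u (c⁻¹ • x)) x) ^ 2)
    = fun x : E3 => l1 * (u (c⁻¹ • x)) ^ 4
      + l2 * (∫ y : E3, K3 (x - y) * (u (c⁻¹ • y)) ^ 2) * (u (c⁻¹ • x)) ^ 2 from rfl]
  rw [hmain, int_scale (fun z : E3 => l1 * (u z) ^ 4
    + l2 * (∫ y : E3, K3 (z - y) * (u y) ^ 2) * (u z) ^ 2) hc]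
  rfl

lemma gpos (Λ C4 Cp l3 p γp α abar rbar : ℝ)
    (hΛ : 0 < Λ) (hC4 : 0 < C4) (hCp : 0 < Cp) (hl3 : l3 < 0)
    (hp1 : 2 < p) (hp2 : p < 10 / 3)
    (hγ : γp = 3 * (p - 2) / (2 * p))
    (hα : α = 1 / 2 * (Λ * C4 ^ 4) ^ ((p * γp - 2) / (p * γp - 3))
        * (4 * |l3| * (2 - p * γp) * Cp ^ p / p) ^ (1 / (3 - p * γp))
      + 2 * (Cp ^ p * |l3| / p) ^ (1 / (3 - p * γp))
        * (4 * (2 - p * γp) / (Λ * C4 ^ 4)) ^ ((p * γp - 2) / (3 - p * γp)))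
    (habar : abar = (1 / (2 * α)) ^ ((3 : ℝ) / 4))
    (hrbar : rbar = (4 * |l3| * (2 - p * γp) * Cp ^ p * abar ^ ((1 - γp) * p - 1)
      / (Λ * C4 ^ 4 * p)) ^ (1 / (3 - p * γp))) :
    0 < abar ∧ 0 < rbar ∧ ∀ b : ℝ, 0 < b → b < abar →
      0 < 1 / 2 - Λ / 2 * C4 ^ 4 * rbar * b
        - 2 * |l3| / p * Cp ^ p * b ^ (p * (1 - γp)) * rbar ^ (p * γp - 2) := by
  have hp0 : (0:ℝ) < p := by linarith
  have hl3' : (0:ℝ) < |l3| := abs_pos.mpr (ne_of_lt hl3)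
  have hCpp : (0:ℝ) < Cp ^ p := Real.rpow_pos_of_pos hCp p
  have hpg : p * γp = 3 * (p - 2) / 2 := by rw [hγ]; field_simp
  set s : ℝ := 3 - p * γp with hsd
  set c1 : ℝ := Λ / 2 * C4 ^ 4 with hc1d
  set c2 : ℝ := 2 * |l3| / p * Cp ^ p with hc2d
  have hc1 : 0 < c1 := by rw [hc1d]; positivity
  have hc2 : 0 < c2 := by rw [hc2d]; positivity
  have hs : 1 < s := by rw [hsd, hpg]; nlinarith
  have hs0 : (0:ℝ) < s := by linarith
  set Q : ℝ := ((s - 1) * c2 / c1) ^ ((1:ℝ) / s) with hQd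
  have hQ : 0 < Q :=
    Real.rpow_pos_of_pos (div_pos (mul_pos (by linarith : (0:ℝ) < s - 1) hc2) hc1) _
  -- rewrite α
  have hαv : α = c1 * Q + c2 * Q ^ (-(s - 1)) := by
    rw [hα]
    have e1 : (p * γp - 2) / (p * γp - 3) = (s - 1) / s := by
      rw [hsd]; rw [show p * γp - 2 = -(3 - p * γp - 1) by ring,
        show p * γp - 3 = -(3 - p * γp) by ring, neg_div_neg_eq]
    have e2 : (p * γp - 2) / s = -((s - 1) / s) := by
      rw [hsd, show p * γp - 2 = -(3 - p * γp - 1) by ring, neg_div]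
    have b1 : Λ * C4 ^ 4 = 2 * c1 := by rw [hc1d]; ring
    have b2 : 4 * |l3| * (2 - p * γp) * Cp ^ p / p = 2 * ((s - 1) * c2) := by
      rw [hsd, hc2d]; field_simp; ring
    have b3 : Cp ^ p * |l3| / p = c2 / 2 := by rw [hc2d]; field_simp
    have b4 : 4 * (2 - p * γp) / (Λ * C4 ^ 4) = 2 * (s - 1) / c1 := by
      rw [hsd, hc1d]; rw [div_eq_div_iff (by positivity) (by positivity)]; ring
    rw [e1, e2, b2, b3, b4, b1, term1_eq hc1 hc2 hs, term2_eq hc1 hc2 hs, hQd]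
  have hα0 : 0 < α := by
    rw [hαv]
    have := Real.rpow_pos_of_pos hQ (-(s - 1))
    positivity
  have habar0 : 0 < abar := by rw [habar]; positivity
  have habar43 : abar ^ ((4:ℝ) / 3) = 1 / (2 * α) := by
    rw [habar, ← Real.rpow_mul (by positivity)]
    norm_num
  -- rbar = Q * abar^(1/3)
  have hE : (1 - γp) * p - 1 = (4 - p) / 2 := by rw [hγ]; field_simp; ring
  have hsv : s = (12 - 3 * p) / 2 := by rw [hsd, hpg]; ring
  have habarE : (0:ℝ) < abar ^ ((1 - γp) * p - 1) := Real.rpow_pos_of_pos habar0 _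
  have hrbarQ : rbar = Q * abar ^ ((1:ℝ) / 3) := by
    rw [hrbar]
    have hin : 4 * |l3| * (2 - p * γp) * Cp ^ p * abar ^ ((1 - γp) * p - 1)
        / (Λ * C4 ^ 4 * p) = ((s - 1) * c2 / c1) * abar ^ ((1 - γp) * p - 1) := by
      rw [hsd, hc2d, hc1d]
      field_simp
      ring
    have hexp : ((1 - γp) * p - 1) * (1 / s) = 1 / 3 := by
      have h12 : (0:ℝ) < 12 - 3 * p := by linarith
      rw [hE, hsv]
      rw [one_div_div, div_mul_div_comm, div_eq_div_iff (ne_of_gt (by linarith)) (by norm_num)]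
      ring
    rw [hin, Real.mul_rpow (le_of_lt (div_pos (mul_pos
        (by linarith : (0:ℝ) < s - 1) hc2) hc1)) (le_of_lt habarE),
      ← Real.rpow_mul (le_of_lt habar0), hexp, hQd]
  have hrbar0 : 0 < rbar := by
    rw [hrbarQ]; exact mul_pos hQ (Real.rpow_pos_of_pos habar0 _)
  have hβ : p * (1 - γp) = (6 - p) / 2 := by rw [hγ]; field_simp; ring
  have hβ0 : 0 < p * (1 - γp) := by rw [hβ]; linarith
  have hQδ : rbar ^ (p * γp - 2) = Q ^ (-(s - 1)) * abar ^ ((p * γp - 2) / 3) := by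
    rw [hrbarQ, Real.mul_rpow (le_of_lt hQ) (le_of_lt (Real.rpow_pos_of_pos habar0 _))]
    congr 1
    · congr 1
      rw [hsd]; ring
    · rw [← Real.rpow_mul (le_of_lt habar0)]
      congr 1
      ring
  have key : c1 * rbar * abar + c2 * abar ^ (p * (1 - γp)) * rbar ^ (p * γp - 2)
      = 1 / 2 := by
    rw [hQδ, hrbarQ]
    have h1 : c1 * (Q * abar ^ ((1:ℝ) / 3)) * abar = c1 * Q * abar ^ ((4:ℝ) / 3) := by
      rw [show abar ^ ((4:ℝ) / 3) = abar ^ ((1:ℝ) / 3) * abar ^ (1:ℝ) from by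
        rw [← Real.rpow_add habar0]; norm_num, Real.rpow_one]
      ring
    have h2 : c2 * abar ^ (p * (1 - γp)) * (Q ^ (-(s - 1)) * abar ^ ((p * γp - 2) / 3))
        = c2 * Q ^ (-(s - 1)) * abar ^ ((4:ℝ) / 3) := by
      rw [show abar ^ ((4:ℝ) / 3)
          = abar ^ (p * (1 - γp)) * abar ^ ((p * γp - 2) / 3) from by
        rw [← Real.rpow_add habar0]; congr 1; rw [hβ, hpg]; ring]
      ring
    rw [h1, h2, show c1 * Q * abar ^ ((4:ℝ) / 3)
        + c2 * Q ^ (-(s - 1)) * abar ^ ((4:ℝ) / 3)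
        = (c1 * Q + c2 * Q ^ (-(s - 1))) * abar ^ ((4:ℝ) / 3) from by ring,
      ← hαv, habar43]
    field_simp
  refine ⟨habar0, hrbar0, ?_⟩
  intro b hb0 hba
  have t1 : c1 * rbar * b < c1 * rbar * abar :=
    mul_lt_mul_of_pos_left hba (mul_pos hc1 hrbar0)
  have hrp : 0 < rbar ^ (p * γp - 2) := Real.rpow_pos_of_pos hrbar0 _
  have hbb : b ^ (p * (1 - γp)) < abar ^ (p * (1 - γp)) :=
    Real.rpow_lt_rpow (le_of_lt hb0) hba hβ0
  have t2 : c2 * b ^ (p * (1 - γp)) * rbar ^ (p * γp - 2)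
      < c2 * abar ^ (p * (1 - γp)) * rbar ^ (p * γp - 2) :=
    mul_lt_mul_of_pos_right (mul_lt_mul_of_pos_left hbb hc2) hrp
  linarith

lemma gradSq_nonneg (u : E3 → ℝ) : 0 ≤ gradSq u :=
  integral_nonneg fun x => by positivity

lemma massSq_nonneg (u : E3 → ℝ) : 0 ≤ massSq u :=
  integral_nonneg fun x => by positivity

lemma J_scale (l1 l2 l3 ω p : ℝ) (u : E3 → ℝ) {t : ℝ} (ht : 1 ≤ t) :
    massSq (fun x => u ((t ^ ((2:ℝ)/3))⁻¹ • x)) = t ^ 2 * massSq u ∧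
    gradSq (fun x => u ((t ^ ((2:ℝ)/3))⁻¹ • x)) = t ^ ((2:ℝ)/3) * gradSq u ∧
    Jfun ω l1 l2 l3 p (fun x => u ((t ^ ((2:ℝ)/3))⁻¹ • x))
      ≤ t ^ 2 * Jfun ω l1 l2 l3 p u := by
  have ht0 : (0:ℝ) < t := lt_of_lt_of_le zero_lt_one ht
  set c : ℝ := t ^ ((2:ℝ)/3) with hcd
  have hc : 0 < c := Real.rpow_pos_of_pos ht0 _
  have hc3 : c ^ 3 = t ^ 2 := by
    rw [hcd, ← Real.rpow_natCast (t ^ ((2:ℝ)/3)) 3, ← Real.rpow_natCast t 2,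
      ← Real.rpow_mul (le_of_lt ht0)]
    norm_num
  have hcc : c ≤ t ^ 2 := by
    rw [hcd, ← Real.rpow_natCast t 2]
    exact Real.rpow_le_rpow_of_exponent_le ht (by norm_num)
  refine ⟨by rw [mass_scale u hc, hc3], grad_scale u hc, ?_⟩
  rw [Jfun, Jfun, mass_scale u hc, grad_scale u hc, nfun_scale u l1 l2 hc,
    pnorm_scale u p hc, hc3]
  have hG : (0:ℝ) ≤ gradSq u := gradSq_nonneg u
  have hdiff : (0:ℝ) ≤ (t ^ 2 - c) * gradSq u := mul_nonneg (by linarith) hG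
  nlinarith [hdiff]

/-- for `Υ_ω(a) = inf_{W^a_{r̄}} J_ω` with `a ∈ (0,ā)`, `0 ≤ ω` and
`Υ_ω(a) < 0` (which holds for `ω < V⁎`): for any `θ > 1` with `θa ∈ (0,ā)`,
`Υ_ω(θa) ≤ θ² Υ_ω(a)`. -/
theorem stmt16 (Λ C4 Cp l1 l2 l3 ω p γp α a abar rbar θ : ℝ) (g : ℝ → ℝ → ℝ)
    (hΛ : 0 < Λ) (hC4 : 0 < C4) (hCp : 0 < Cp)
    (hB : (l1, l2) ∈ Bset) (hl3 : l3 < 0)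
    (hp1 : 2 < p) (hp2 : p < 10 / 3) (hω : 0 ≤ ω)
    (hγ : γp = 3 * (p - 2) / (2 * p))
    (hg : g = fun b r => 1 / 2 - Λ / 2 * C4 ^ 4 * r * b
      - 2 * |l3| / p * Cp ^ p * b ^ (p * (1 - γp)) * r ^ (p * γp - 2))
    (hα : α = 1 / 2 * (Λ * C4 ^ 4) ^ ((p * γp - 2) / (p * γp - 3))
        * (4 * |l3| * (2 - p * γp) * Cp ^ p / p) ^ (1 / (3 - p * γp))
      + 2 * (Cp ^ p * |l3| / p) ^ (1 / (3 - p * γp))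
        * (4 * (2 - p * γp) / (Λ * C4 ^ 4)) ^ ((p * γp - 2) / (3 - p * γp)))
    (habar : abar = (1 / (2 * α)) ^ ((3 : ℝ) / 4))
    (hrbar : rbar = (4 * |l3| * (2 - p * γp) * Cp ^ p * abar ^ ((1 - γp) * p - 1)
      / (Λ * C4 ^ 4 * p)) ^ (1 / (3 - p * γp)))
    (ha : 0 < a) (haa : a < abar)
    (hJlow : ∀ (u : E3 → ℝ) (b : ℝ), 0 < b → massSq u = b ^ 2 →
      gradSq u * g b (Real.sqrt (gradSq u)) ≤ Jfun 0 l1 l2 l3 p u)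
    (hneg : sInf (Jfun ω l1 l2 l3 p '' Wset a rbar) < 0)
    (hθ : 1 < θ) (hθa : θ * a < abar) :
    sInf (Jfun ω l1 l2 l3 p '' Wset (θ * a) rbar)
      ≤ θ ^ 2 * sInf (Jfun ω l1 l2 l3 p '' Wset a rbar) := by
  obtain ⟨habar0, hrbar0, hgpos⟩ :=
    gpos Λ C4 Cp l3 p γp α abar rbar hΛ hC4 hCp hl3 hp1 hp2 hγ hα habar hrbar
  have hθ0 : (0:ℝ) < θ := by linarith
  have hθ2 : (0:ℝ) < θ ^ 2 := by positivity
  have hp0 : (0:ℝ) < p := by linarith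
  have hl3' : (0:ℝ) < |l3| := abs_pos.mpr (ne_of_lt hl3)
  have hCpp : (0:ℝ) < Cp ^ p := Real.rpow_pos_of_pos hCp p
  have hpg : p * γp = 3 * (p - 2) / 2 := by rw [hγ]; field_simp
  have hpg0 : 0 < p * γp := by rw [hpg]; linarith
  set J : (E3 → ℝ) → ℝ := Jfun ω l1 l2 l3 p with hJd
  have hsplit : ∀ u : E3 → ℝ, Jfun 0 l1 l2 l3 p u = J u - ω * massSq u := by
    intro u; rw [hJd]; rw [Jfun, Jfun]; ring
  have hAne : (J '' Wset a rbar).Nonempty := by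
    by_contra h
    rw [not_nonempty_iff_eq_empty] at h
    rw [h, Real.sInf_empty] at hneg
    exact lt_irrefl 0 hneg
  have hAbdd : BddBelow (J '' Wset a rbar) := by
    by_contra h
    rw [csInf_of_not_bddBelow h, Real.sInf_empty] at hneg
    exact lt_irrefl 0 hneg
  -- lower bound on J over Wset b rbar
  have hlow : ∀ (b : ℝ), 0 < b → ∀ u ∈ Wset b rbar,
      -(Λ / 2 * C4 ^ 4 * b * rbar ^ 3
        + 2 * |l3| / p * Cp ^ p * b ^ (p * (1 - γp)) * rbar ^ (p * γp)) ≤ J u := by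
    intro b hb u hu
    obtain ⟨hum, hur⟩ := hu
    have hG := gradSq_nonneg u
    set r := Real.sqrt (gradSq u) with hrd
    have hr0 : 0 ≤ r := Real.sqrt_nonneg _
    have hr2 : r ^ 2 = gradSq u := Real.sq_sqrt hG
    have hlow0 := hJlow u b hb hum
    rw [hg] at hlow0
    simp only at hlow0
    rw [hsplit u] at hlow0
    have hωm : 0 ≤ ω * massSq u := by rw [hum]; positivity
    have hbβ : 0 < b ^ (p * (1 - γp)) := Real.rpow_pos_of_pos hb _
    have hM : 0 ≤ Λ / 2 * C4 ^ 4 * b * rbar ^ 3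
        + 2 * |l3| / p * Cp ^ p * b ^ (p * (1 - γp)) * rbar ^ (p * γp) := by
      have h1 : (0:ℝ) < rbar ^ 3 := by positivity
      have h2 : (0:ℝ) < rbar ^ (p * γp) := Real.rpow_pos_of_pos hrbar0 _
      positivity
    rcases eq_or_lt_of_le hr0 with h0 | hrpos
    · have hg0 : gradSq u = 0 := by rw [← hr2, ← h0]; ring
      rw [hg0] at hlow0
      simp only [zero_mul] at hlow0
      linarith
    · have hrw : r ^ (2:ℕ) * r ^ (p * γp - 2) = r ^ (p * γp) := by
        rw [← Real.rpow_natCast r 2, ← Real.rpow_add hrpos]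
        norm_num
      have hkey : gradSq u * (1 / 2 - Λ / 2 * C4 ^ 4 * r * b
          - 2 * |l3| / p * Cp ^ p * b ^ (p * (1 - γp)) * r ^ (p * γp - 2))
          = r ^ 2 / 2 - Λ / 2 * C4 ^ 4 * b * r ^ 3
            - 2 * |l3| / p * Cp ^ p * b ^ (p * (1 - γp)) * r ^ (p * γp) := by
        rw [← hr2, ← hrw]; ring
      rw [hkey] at hlow0
      have hr3 : r ^ 3 ≤ rbar ^ 3 := pow_le_pow_left₀ hr0 (le_of_lt hur) 3
      have hrp : r ^ (p * γp) ≤ rbar ^ (p * γp) :=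
        Real.rpow_le_rpow hr0 (le_of_lt hur) (le_of_lt hpg0)
      have b1 : Λ / 2 * C4 ^ 4 * b * r ^ 3 ≤ Λ / 2 * C4 ^ 4 * b * rbar ^ 3 :=
        mul_le_mul_of_nonneg_left hr3 (by positivity)
      have b2 : 2 * |l3| / p * Cp ^ p * b ^ (p * (1 - γp)) * r ^ (p * γp)
          ≤ 2 * |l3| / p * Cp ^ p * b ^ (p * (1 - γp)) * rbar ^ (p * γp) :=
        mul_le_mul_of_nonneg_left hrp (by positivity)
      have hr2nn : (0:ℝ) ≤ r ^ 2 / 2 := by positivity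
      linarith
  have hBbdd : BddBelow (J '' Wset (θ * a) rbar) := by
    refine ⟨-(Λ / 2 * C4 ^ 4 * (θ * a) * rbar ^ 3
      + 2 * |l3| / p * Cp ^ p * (θ * a) ^ (p * (1 - γp)) * rbar ^ (p * γp)), ?_⟩
    rintro x ⟨u, hu, rfl⟩
    exact hlow (θ * a) (mul_pos hθ0 ha) u hu
  -- scaled membership
  have hmem : ∀ u ∈ Wset a rbar, J u < 0 →
      (fun x : E3 => u ((θ ^ ((2:ℝ)/3))⁻¹ • x)) ∈ Wset (θ * a) rbar ∧
      J (fun x : E3 => u ((θ ^ ((2:ℝ)/3))⁻¹ • x)) ≤ θ ^ 2 * J u := by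
    intro u hu hJu
    obtain ⟨hum, hur⟩ := hu
    have hG := gradSq_nonneg u
    set r := Real.sqrt (gradSq u) with hrd
    have hr0 : 0 ≤ r := Real.sqrt_nonneg _
    have hr2 : r ^ 2 = gradSq u := Real.sq_sqrt hG
    have hsqrt : ∀ t : ℝ, 1 ≤ t →
        Real.sqrt (gradSq (fun x : E3 => u ((t ^ ((2:ℝ)/3))⁻¹ • x)))
          = t ^ ((1:ℝ)/3) * r := by
      intro t ht1
      have ht0 : (0:ℝ) < t := lt_of_lt_of_le zero_lt_one ht1
      obtain ⟨_, hgv, _⟩ := J_scale l1 l2 l3 ω p u ht1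
      rw [hgv, Real.sqrt_mul (Real.rpow_nonneg (le_of_lt ht0) _), hrd]
      congr 1
      rw [Real.sqrt_eq_rpow, ← Real.rpow_mul (le_of_lt ht0)]
      norm_num
    have hrpos : 0 < r := by
      rcases eq_or_lt_of_le hr0 with h0 | h
      · exfalso
        have hg0 : gradSq u = 0 := by rw [← hr2, ← h0]; ring
        have hl0 := hJlow u a ha hum
        rw [hg0, hsplit u, hum] at hl0
        simp only [zero_mul] at hl0
        have hω2 : (0:ℝ) ≤ ω * a ^ 2 := by positivity
        linarith
      · exact h
    have hclaim : ∀ t : ℝ, 1 ≤ t → t ≤ θ → t ^ ((1:ℝ)/3) * r ≠ rbar := by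
      intro t ht1 htθ hEq
      have ht0 : (0:ℝ) < t := lt_of_lt_of_le zero_lt_one ht1
      obtain ⟨hmv, hgv, hJv⟩ := J_scale l1 l2 l3 ω p u ht1
      have hmv' : massSq (fun x : E3 => u ((t ^ ((2:ℝ)/3))⁻¹ • x)) = (t * a) ^ 2 := by
        rw [hmv, hum]; ring
      have hJv0 : Jfun 0 l1 l2 l3 p (fun x : E3 => u ((t ^ ((2:ℝ)/3))⁻¹ • x)) < 0 := by
        have h2 : t ^ 2 * J u < 0 := mul_neg_of_pos_of_neg (by positivity) hJu
        rw [hsplit]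
        have h3 : 0 ≤ ω * massSq (fun x : E3 => u ((t ^ ((2:ℝ)/3))⁻¹ • x)) := by
          rw [hmv']; positivity
        have h4 : J (fun x : E3 => u ((t ^ ((2:ℝ)/3))⁻¹ • x)) ≤ t ^ 2 * J u := hJv
        linarith
      have hlow2 := hJlow (fun x : E3 => u ((t ^ ((2:ℝ)/3))⁻¹ • x)) (t * a)
        (mul_pos ht0 ha) hmv'
      rw [hsqrt t ht1, hEq, hg] at hlow2
      simp only at hlow2
      have hgv0 : 0 < gradSq (fun x : E3 => u ((t ^ ((2:ℝ)/3))⁻¹ • x)) := by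
        rw [hgv, ← hr2]
        have : (0:ℝ) < t ^ ((2:ℝ)/3) := Real.rpow_pos_of_pos ht0 _
        positivity
      have hneg2 : 1 / 2 - Λ / 2 * C4 ^ 4 * rbar * (t * a)
          - 2 * |l3| / p * Cp ^ p * (t * a) ^ (p * (1 - γp)) * rbar ^ (p * γp - 2)
          < 0 := by
        by_contra hcon
        push_neg at hcon
        have := mul_nonneg (le_of_lt hgv0) hcon
        linarith
      have hta : t * a < abar :=
        lt_of_le_of_lt (mul_le_mul_of_nonneg_right htθ (le_of_lt ha)) hθa
      have hpos2 := hgpos (t * a) (mul_pos ht0 ha) hta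
      linarith
    have hcont : ContinuousOn (fun t : ℝ => t ^ ((1:ℝ)/3) * r) (Icc 1 θ) := by
      intro t ht
      have ht0 : t ≠ 0 := by
        have := ht.1; intro h; rw [h] at this; linarith
      exact ((Real.continuousAt_rpow_const t _ (Or.inl ht0)).mul
        continuousAt_const).continuousWithinAt
    have hless : θ ^ ((1:ℝ)/3) * r < rbar := by
      by_contra hcon
      push_neg at hcon
      have hsub := intermediate_value_Icc (le_of_lt hθ) hcont
      have hmemI : rbar ∈ Icc ((fun t : ℝ => t ^ ((1:ℝ)/3) * r) 1)
          ((fun t : ℝ => t ^ ((1:ℝ)/3) * r) θ) := by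
        constructor
        · simp only [Real.one_rpow, one_mul]
          exact le_of_lt hur
        · exact hcon
      obtain ⟨t, htI, hteq⟩ := hsub hmemI
      exact hclaim t htI.1 htI.2 hteq
    obtain ⟨hmv, hgv, hJv⟩ := J_scale l1 l2 l3 ω p u (le_of_lt hθ)
    refine ⟨⟨by rw [hmv, hum]; ring, ?_⟩, hJv⟩
    rw [hsqrt θ (le_of_lt hθ)]
    exact hless
  -- final glue
  apply _root_.le_of_forall_pos_le_add
  intro ε hε
  set m : ℝ := sInf (J '' Wset a rbar) with hmd
  have hδ0 : 0 < min (ε / θ ^ 2) (-m) := lt_min (by positivity) (by linarith)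
  obtain ⟨x, hxA, hxlt⟩ := Real.lt_sInf_add_pos hAne hδ0
  obtain ⟨u, hu, rfl⟩ := hxA
  have hJu0 : J u < 0 := by
    have h1 := min_le_right (ε / θ ^ 2) (-m)
    linarith
  obtain ⟨hvmem, hvle⟩ := hmem u hu hJu0
  have h2 : sInf (J '' Wset (θ * a) rbar)
      ≤ J (fun x : E3 => u ((θ ^ ((2:ℝ)/3))⁻¹ • x)) :=
    csInf_le hBbdd ⟨_, hvmem, rfl⟩
  have h3 : θ ^ 2 * J u ≤ θ ^ 2 * (m + min (ε / θ ^ 2) (-m)) :=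
    mul_le_mul_of_nonneg_left (le_of_lt hxlt) (le_of_lt hθ2)
  have h4 : θ ^ 2 * min (ε / θ ^ 2) (-m) ≤ ε := by
    have h5 := min_le_left (ε / θ ^ 2) (-m)
    have h6 : θ ^ 2 * min (ε / θ ^ 2) (-m) ≤ θ ^ 2 * (ε / θ ^ 2) :=
      mul_le_mul_of_nonneg_left h5 (le_of_lt hθ2)
    have h7 : θ ^ 2 * (ε / θ ^ 2) = ε := by field_simp
    linarith
  have h8 : θ ^ 2 * (m + min (ε / θ ^ 2) (-m))
      = θ ^ 2 * m + θ ^ 2 * min (ε / θ ^ 2) (-m) := by ring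
  linarith
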